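/- Let p be an odd prime, n ≥ 2, and suppose r, s, t are integers with s > 0, gcd(r,s) = 1, |r| + s > n, s·A = t·p - r for an integer A with |A| < p/2 and p ∤ A, and p > |r|·s·n. Then for every pair i, j with 0 ≤ i, j < n, there exists x with 1 ≤ x ≤ p-1, x ≡ i (mod n), and the least positive residue of A·x mod p is congruent to j (mod n). -/
import Mathlib

set_option maxHeartbeats 1000000

/-- Key floor-division inequality: a sharp lower bound for a sum of two floors. -/
private lemma key_div (c d X Y M : ℤ) (hc : 0 < c) (hd : 0 < d)
    (h : (M + 2) * (c * d) + 1 ≤ d * X + c * Y + d + c) :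
    M + 1 ≤ X / c + Y / d := by
  have h1 : X % c < c := Int.emod_lt_of_pos X hc
  have h1' : 0 ≤ X % c := Int.emod_nonneg X (ne_of_gt hc)
  have h2 : Y % d < d := Int.emod_lt_of_pos Y hd
  have h2' : 0 ≤ Y % d := Int.emod_nonneg Y (ne_of_gt hd)
  have e1 : c * (X / c) = X - X % c := by
    have := Int.emod_def X c; linarith
  have e2 : d * (Y / d) = Y - Y % d := by
    have := Int.emod_def Y d; linarith
  have h1'' : X % c ≤ c - 1 := by linarith
  have h2'' : Y % d ≤ d - 1 := by linarith
  have hd1 : d * (X % c) ≤ d * (c - 1) := by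
    exact mul_le_mul_of_nonneg_left h1'' (le_of_lt hd)
  have hc1 : c * (Y % d) ≤ c * (d - 1) := by
    exact mul_le_mul_of_nonneg_left h2'' (le_of_lt hc)
  have h3' : (c * d) * (X / c + Y / d) = d * X - d * (X % c) + c * Y - c * (Y % d) := by
    linear_combination d * e1 + c * e2
  have hcd : (0 : ℤ) < c * d := mul_pos hc hd
  have h3 : M * (c * d) < (c * d) * (X / c + Y / d) := by nlinarith
  have h4 : M < X / c + Y / d := by
    by_contra hcon
    push_neg at hcon
    have := mul_le_mul_of_nonneg_left hcon (le_of_lt hcd)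
    linarith
  exact Int.add_one_le_iff.mpr h4

/-- The positive-`r` lattice lemma: the lattice `p ∣ r x + s y` meets every pair of
residue classes mod `n` inside the box `[1,p-1]²`. -/
private lemma pos_case (p n r s : ℤ) (hr : 1 ≤ r) (hs : 1 ≤ s)
    (hrs : Int.gcd r s = 1) (hn : 2 ≤ n) (hbig : n + 1 ≤ r + s)
    (hplarge : r * s * n < p) (hpn : Int.gcd p n = 1) :
    ∀ i j : ℤ, 0 ≤ i → i < n → 0 ≤ j → j < n →
      ∃ x y : ℤ, 1 ≤ x ∧ x ≤ p - 1 ∧ 1 ≤ y ∧ y ≤ p - 1 ∧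
        p ∣ (r * x + s * y) ∧ x % n = i ∧ y % n = j := by
  intro i j hi0 hi1 hj0 hj1
  have hn0 : (0:ℤ) < n := by linarith
  have hr0 : (0:ℤ) < r := by linarith
  have hs0 : (0:ℤ) < s := by linarith
  have hrsn : (0:ℤ) < r * s * n := mul_pos (mul_pos hr0 hs0) hn0
  have hp0 : (0:ℤ) < p := by linarith
  obtain ⟨u, v, huv⟩ : ∃ u v : ℤ, r * u + s * v = 1 := by
    refine ⟨Int.gcdA r s, Int.gcdB r s, ?_⟩
    have h := Int.gcd_eq_gcd_ab r s
    rw [hrs] at h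
    exact_mod_cast h.symm
  obtain ⟨w, z, hwz⟩ : ∃ w z : ℤ, p * w + n * z = 1 := by
    refine ⟨Int.gcdA p n, Int.gcdB p n, ?_⟩
    have h := Int.gcd_eq_gcd_ab p n
    rw [hpn] at h
    exact_mod_cast h.symm
  set k0 := (r * i + s * j) * w with hk0
  set k := 1 + (k0 - 1) % n with hk
  have hek := Int.emod_def (k0 - 1) n
  have he0 : 0 ≤ (k0 - 1) % n := Int.emod_nonneg _ (ne_of_gt hn0)
  have he1 : (k0 - 1) % n < n := Int.emod_lt_of_pos _ hn0
  have hk1 : 1 ≤ k := by rw [hk]; linarith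
  have hk2 : k ≤ n := by rw [hk]; linarith
  set x0 := k * p * u with hx0
  set y0 := k * p * v with hy0
  have hline : r * x0 + s * y0 = k * p := by
    rw [hx0, hy0]; linear_combination (k * p) * huv
  set m1 := u * (y0 - j) + v * (i - x0) with hm1
  set L1 := -((x0 - 1) / s) with hL1
  set L2 := -((p - 1 - y0) / r) with hL2
  set U1 := (p - 1 - x0) / s with hU1
  set U2 := (y0 - 1) / r with hU2
  set lo := max L1 L2 with hlo
  set q := (lo - m1 + n - 1) / n with hq
  set m := m1 + n * q with hm
  -- m ∈ [lo, lo + n - 1], m ≡ m1 (mod n)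
  have hmod := Int.emod_def (lo - m1 + n - 1) n
  rw [← hq] at hmod
  have hmod0 : 0 ≤ (lo - m1 + n - 1) % n := Int.emod_nonneg _ (ne_of_gt hn0)
  have hmod1 : (lo - m1 + n - 1) % n < n := Int.emod_lt_of_pos _ hn0
  have hmod1' : (lo - m1 + n - 1) % n ≤ n - 1 := by linarith
  have hm_lo : lo ≤ m := by rw [hm]; linarith
  have hm_hi : m ≤ lo + n - 1 := by rw [hm]; linarith
  -- the four corner inequalities
  have hA : L1 + (n - 1) ≤ U1 := by
    have hkey := key_div s s (p - 1 - x0) (x0 - 1) (n - 2) hs0 hs0 ?_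
    · rw [hL1, hU1]; linarith
    · have h1 : (0:ℤ) ≤ s * s := by positivity
      have h2 : (0:ℤ) ≤ n * (s * s) := by positivity
      have h3 : (0:ℤ) ≤ (r - 1) * (n * (s * s)) := by
        have : (0:ℤ) ≤ r - 1 := by linarith
        positivity
      have hps : s * (r * s * n + 1) ≤ s * p := by
        exact mul_le_mul_of_nonneg_left (by linarith) (by linarith)
      nlinarith
  have hB : L2 + (n - 1) ≤ U2 := by
    have hkey := key_div r r (y0 - 1) (p - 1 - y0) (n - 2) hr0 hr0 ?_
    · rw [hL2, hU2]; linarith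
    · have h3 : (0:ℤ) ≤ (s - 1) * (n * (r * r)) := by
        have : (0:ℤ) ≤ s - 1 := by linarith
        positivity
      have hps : r * (r * s * n + 1) ≤ r * p := by
        exact mul_le_mul_of_nonneg_left (by linarith) (by linarith)
      nlinarith
  have hC : L1 + (n - 1) ≤ U2 := by
    have hkey := key_div r s (y0 - 1) (x0 - 1) (n - 2) hr0 hs0 ?_
    · rw [hL1, hU2]; linarith
    · have h1 : (0:ℤ) ≤ (k - 1) * p := by
        have : (0:ℤ) ≤ k - 1 := by linarith
        positivity
      nlinarith [hline]
  have hD : L2 + (n - 1) ≤ U1 := by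
    have hkey := key_div s r (p - 1 - x0) (p - 1 - y0) (n - 2) hs0 hr0 ?_
    · rw [hL2, hU1]; linarith
    · have h1 : (0:ℤ) ≤ (r + s - k - 1) * p := by
        have : (0:ℤ) ≤ r + s - k - 1 := by linarith
        positivity
      nlinarith [hline]
  have hm_U1 : m ≤ U1 := by
    have h5 : lo ≤ U1 - (n - 1) := max_le (by linarith) (by linarith)
    linarith
  have hm_U2 : m ≤ U2 := by
    have h5 : lo ≤ U2 - (n - 1) := max_le (by linarith) (by linarith)
    linarith
  have hm_L1 : L1 ≤ m := le_trans (le_max_left _ _) hm_lo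
  have hm_L2 : L2 ≤ m := le_trans (le_max_right _ _) hm_lo
  -- division facts
  have dv1 : s * ((x0 - 1) / s) ≤ x0 - 1 := by
    have h := Int.emod_def (x0 - 1) s
    have h' := Int.emod_nonneg (x0 - 1) (ne_of_gt hs0)
    linarith
  have dv2 : r * ((p - 1 - y0) / r) ≤ p - 1 - y0 := by
    have h := Int.emod_def (p - 1 - y0) r
    have h' := Int.emod_nonneg (p - 1 - y0) (ne_of_gt hr0)
    linarith
  have dv3 : s * ((p - 1 - x0) / s) ≤ p - 1 - x0 := by
    have h := Int.emod_def (p - 1 - x0) s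
    have h' := Int.emod_nonneg (p - 1 - x0) (ne_of_gt hs0)
    linarith
  have dv4 : r * ((y0 - 1) / r) ≤ y0 - 1 := by
    have h := Int.emod_def (y0 - 1) r
    have h' := Int.emod_nonneg (y0 - 1) (ne_of_gt hr0)
    linarith
  refine ⟨x0 + m * s, y0 - m * r, ?_, ?_, ?_, ?_, ?_, ?_, ?_⟩
  · -- 1 ≤ x
    have h6 : L1 * s ≤ m * s := mul_le_mul_of_nonneg_right hm_L1 (by linarith)
    have h7 : L1 * s = -(s * ((x0 - 1) / s)) := by rw [hL1]; ring
    linarith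
  · -- x ≤ p - 1
    have h6 : m * s ≤ U1 * s := mul_le_mul_of_nonneg_right hm_U1 (by linarith)
    have h7 : U1 * s = s * ((p - 1 - x0) / s) := by rw [hU1]; ring
    linarith
  · -- 1 ≤ y
    have h6 : m * r ≤ U2 * r := mul_le_mul_of_nonneg_right hm_U2 (by linarith)
    have h7 : U2 * r = r * ((y0 - 1) / r) := by rw [hU2]; ring
    linarith
  · -- y ≤ p - 1
    have h6 : L2 * r ≤ m * r := mul_le_mul_of_nonneg_right hm_L2 (by linarith)
    have h7 : L2 * r = -(r * ((p - 1 - y0) / r)) := by rw [hL2]; ring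
    linarith
  · -- p ∣ r x + s y
    exact ⟨k, by linear_combination hline⟩
  · -- x % n = i
    have hdiv_main : k * p - r * i - s * j
        = n * (-((k0 - 1) / n) * p - (r * i + s * j) * z) := by
      linear_combination p * hk + p * hek + p * hk0 + (r * i + s * j) * hwz
    have e1 : x0 + m1 * s - i = u * ((r * x0 + s * y0) - r * i - s * j) := by
      rw [hm1]; linear_combination (i - x0) * huv
    have hx_dvd : n ∣ (x0 + m * s - i) := by
      refine ⟨u * (-((k0 - 1) / n) * p - (r * i + s * j) * z) + q * s, ?_⟩
      linear_combination e1 + u * hline + u * hdiv_main + s * hm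
    obtain ⟨c, hc⟩ := hx_dvd
    have hxeq : x0 + m * s = i + n * c := by linarith
    rw [hxeq, Int.add_mul_emod_self_left, Int.emod_eq_of_lt hi0 hi1]
  · -- y % n = j
    have hdiv_main : k * p - r * i - s * j
        = n * (-((k0 - 1) / n) * p - (r * i + s * j) * z) := by
      linear_combination p * hk + p * hek + p * hk0 + (r * i + s * j) * hwz
    have e2 : y0 - m1 * r - j = v * ((r * x0 + s * y0) - r * i - s * j) := by
      rw [hm1]; linear_combination (j - y0) * huv
    have hy_dvd : n ∣ (y0 - m * r - j) := by
      refine ⟨v * (-((k0 - 1) / n) * p - (r * i + s * j) * z) - q * r, ?_⟩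
      linear_combination e2 + v * hline + v * hdiv_main - r * hm
    obtain ⟨c, hc⟩ := hy_dvd
    have hyeq : y0 - m * r = j + n * c := by linarith
    rw [hyeq, Int.add_mul_emod_self_left, Int.emod_eq_of_lt hj0 hj1]

theorem stmt_3 (p n r s t A : ℤ) (hp : Prime p) (hodd : Odd p) (hn : 2 ≤ n)
    (hs : 0 < s) (hrs : Int.gcd r s = 1) (hbig : n < |r| + s)
    (hA : s * A = t * p - r) (hAsize : 2 * |A| < p) (hpA : ¬ p ∣ A)
    (hplarge : |r| * s * n < p) :
    ∀ i j : ℤ, 0 ≤ i → i < n → 0 ≤ j → j < n →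
      ∃ x : ℤ, 1 ≤ x ∧ x ≤ p - 1 ∧ x % n = i ∧ ((A * x) % p) % n = j := by
  intro i j hi0 hi1 hj0 hj1
  have hn0 : (0:ℤ) < n := by linarith
  -- r ≠ 0
  have hr0 : r ≠ 0 := by
    intro h
    subst h
    have hs1 : s = 1 := by
      have := hrs
      rw [Int.gcd_zero_left] at this
      omega
    apply hpA
    rw [hs1] at hA
    exact ⟨t, by linarith⟩
  have habs : 1 ≤ |r| := Int.one_le_abs hr0
  have hs1' : (1:ℤ) ≤ s := hs
  have hn1' : (1:ℤ) ≤ n := by linarith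
  have h2 : (1:ℤ) * 1 ≤ |r| * s := mul_le_mul habs hs1' (by norm_num) (abs_nonneg r)
  have h3 : (1:ℤ) * n ≤ (|r| * s) * n := mul_le_mul_of_nonneg_right (by linarith) (by linarith)
  have hnp : n < p := by linarith [h3]
  have hp0 : (0:ℤ) < p := by linarith
  have h4 : (1:ℤ) * 1 ≤ |r| * n := mul_le_mul habs hn1' (by norm_num) (abs_nonneg r)
  have h5 : s * 1 ≤ s * (|r| * n) := mul_le_mul_of_nonneg_left (by linarith) (by linarith)
  have hsp : s < p := by
    have : s * (|r| * n) = |r| * s * n := by ring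
    linarith
  have hpn : Int.gcd p n = 1 := by
    have hpp : p.natAbs.Prime := Int.prime_iff_natAbs_prime.mp hp
    have hnd : ¬ (p.natAbs ∣ n.natAbs) := by
      intro hd
      have hn1 : 0 < n.natAbs := Int.natAbs_pos.mpr (by omega)
      have := Nat.le_of_dvd hn1 hd
      have e1 : (p.natAbs : ℤ) = p := Int.natAbs_of_nonneg (by linarith)
      have e2 : (n.natAbs : ℤ) = n := Int.natAbs_of_nonneg (by linarith)
      have : (p.natAbs : ℤ) ≤ (n.natAbs : ℤ) := by exact_mod_cast this
      omega
    exact (Nat.Prime.coprime_iff_not_dvd hpp).mpr hnd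
  have hps : ¬ p ∣ s := by
    intro hd
    have := Int.le_of_dvd hs hd
    omega
  rcases lt_or_gt_of_ne hr0 with hneg | hpos
  · -- r < 0 : apply pos_case with -r and target j' = (p - j) % n
    have habs' : |r| = -r := abs_of_neg hneg
    set j' := (p - j) % n with hj'
    have hj'0 : 0 ≤ j' := Int.emod_nonneg _ (ne_of_gt hn0)
    have hj'1 : j' < n := Int.emod_lt_of_pos _ hn0
    obtain ⟨x, y, hx1, hx2, hy1, hy2, hdvd, hxmod, hymod⟩ :=
      pos_case p n (-r) s (by omega) (by omega)
        (by rw [Int.neg_gcd]; exact hrs) hn (by omega)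
        (by rw [habs'] at hplarge; linarith) hpn i j' hi0 hi1 hj'0 hj'1
    obtain ⟨c, hc⟩ := hdvd
    have d2 : p ∣ s * (y + A * x) := ⟨c + x * t, by linear_combination hc + x * hA⟩
    have d3 : p ∣ (y + A * x) := (hp.2.2 _ _ d2).resolve_left hps
    obtain ⟨c2, hc2⟩ := d3
    have hAx : A * x = (p - y) + p * (c2 - 1) := by linarith
    have hmod : (A * x) % p = p - y := by
      rw [hAx, Int.add_mul_emod_self_left, Int.emod_eq_of_lt (by linarith) (by linarith)]
    refine ⟨x, hx1, hx2, hxmod, ?_⟩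
    rw [hmod]
    -- y % n = (p - j) % n, so p - y ≡ j (mod n)
    have hme : Int.ModEq n y (p - j) := hymod
    obtain ⟨c3, hc3⟩ := Int.ModEq.dvd hme
    have : p - y = j + n * c3 := by linarith
    rw [this, Int.add_mul_emod_self_left, Int.emod_eq_of_lt hj0 hj1]
  · -- r > 0
    have habs' : |r| = r := abs_of_pos hpos
    obtain ⟨x, y, hx1, hx2, hy1, hy2, hdvd, hxmod, hymod⟩ :=
      pos_case p n r s (by omega) (by omega) hrs hn (by omega)
        (by rw [habs'] at hplarge; linarith) hpn i j hi0 hi1 hj0 hj1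
    obtain ⟨c, hc⟩ := hdvd
    have d2 : p ∣ s * (y - A * x) := ⟨c - x * t, by linear_combination hc - x * hA⟩
    have d3 : p ∣ (y - A * x) := (hp.2.2 _ _ d2).resolve_left hps
    obtain ⟨c2, hc2⟩ := d3
    have hAx : A * x = y + p * (-c2) := by linarith
    have hmod : (A * x) % p = y := by
      rw [hAx, Int.add_mul_emod_self_left, Int.emod_eq_of_lt (by linarith) (by linarith)]
    refine ⟨x, hx1, hx2, hxmod, ?_⟩
    rw [hmod, hymod]
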